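/- Let ξ > 0 and let F̄ : [0,∞) → (0,∞) be a nonincreasing function satisfying F̄(ux)/F̄(u) → x^{−1/ξ−1} as u → ∞, for every real x ≥ 1. Then u^{−1} ∑_{i=0}^{∞} F̄(u + i)/F̄(u) → ξ as u → ∞. -/

import Mathlib

open Filter Finset

namespace RVAux

/-- block boundary index -/
noncomputable def bdry (x u : ℝ) (k : ℕ) : ℕ := ⌈u * (x ^ k - 1)⌉₊

lemma bdry_zero (x u : ℝ) : bdry x u 0 = 0 := by simp [bdry]

lemma bdry_mono {x u : ℝ} (hx : 1 < x) (hu : 0 ≤ u) : Monotone (bdry x u) := by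
  intro k l hkl
  exact Nat.ceil_mono (by
    have := pow_le_pow_right₀ hx.le hkl
    nlinarith)

lemma le_bdry (x u : ℝ) (k : ℕ) : u * (x ^ k - 1) ≤ bdry x u k := Nat.le_ceil _

lemma bdry_lt {x u : ℝ} (hx : 1 < x) (hu : 0 ≤ u) (k : ℕ) :
    (bdry x u k : ℝ) < u * (x ^ k - 1) + 1 :=
  Nat.ceil_lt_add_one (by nlinarith [one_le_pow₀ hx.le (n := k)])

variable {F : ℝ → ℝ}

section
variable (hFpos : ∀ y ≥ (0:ℝ), 0 < F y) (hFanti : AntitoneOn F (Set.Ici 0))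
variable {x u : ℝ} (hx : 1 < x) (hu : 0 < u)
include hFpos hFanti hx hu

lemma block_upper (K : ℕ) :
    ∑ i ∈ range (bdry x u K), F (u + i) ≤
      ∑ k ∈ range K, (u * x ^ k * (x - 1) + 1) * F (u * x ^ k) := by
  induction K with
  | zero => simp [bdry_zero]
  | succ K ih =>
    have hsplit : ∑ i ∈ Finset.range (bdry x u (K+1)), F (u + i)
        = ∑ i ∈ Finset.range (bdry x u K), F (u + i)
          + ∑ i ∈ Finset.Ico (bdry x u K) (bdry x u (K+1)), F (u + i) := by
      simp only [Finset.range_eq_Ico]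
      exact (Finset.sum_Ico_consecutive (fun i : ℕ => F (u + i)) (Nat.zero_le _)
        (bdry_mono hx hu.le (Nat.le_succ K))).symm
    rw [hsplit, Finset.sum_range_succ]
    refine add_le_add ih ?_
    have hxK : (0:ℝ) < u * x ^ K := by positivity
    have hblock : ∀ i ∈ Finset.Ico (bdry x u K) (bdry x u (K+1)), F (u + i) ≤ F (u * x ^ K) := by
      intro i hi
      rw [Finset.mem_Ico] at hi
      have h1 : u * (x ^ K - 1) ≤ (i:ℝ) := le_trans (le_bdry x u K) (Nat.cast_le.2 hi.1)
      exact hFanti (Set.mem_Ici.2 hxK.le) (Set.mem_Ici.2 (by positivity)) (by nlinarith)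
    calc ∑ i ∈ Finset.Ico (bdry x u K) (bdry x u (K+1)), F (u + i)
        ≤ ∑ _i ∈ Finset.Ico (bdry x u K) (bdry x u (K+1)), F (u * x ^ K) :=
          Finset.sum_le_sum hblock
      _ = (bdry x u (K+1) - bdry x u K : ℕ) * F (u * x ^ K) := by
          rw [Finset.sum_const, Nat.card_Ico, nsmul_eq_mul]
      _ ≤ (u * x ^ K * (x - 1) + 1) * F (u * x ^ K) := by
          refine mul_le_mul_of_nonneg_right ?_ (hFpos _ hxK.le).le
          have h1 := bdry_lt hx hu.le (k := K + 1)
          have h2 := le_bdry x u K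
          have h3 : (((bdry x u (K+1) - bdry x u K : ℕ)) : ℝ)
              = (bdry x u (K+1) : ℝ) - bdry x u K :=
            Nat.cast_sub (bdry_mono hx hu.le (Nat.le_succ K))
          rw [h3]
          have : x ^ (K+1) = x ^ K * x := pow_succ x K
          nlinarith

lemma block_lower (K : ℕ) :
    ∑ k ∈ range K, (u * x ^ k * (x - 1) - 1) * F (u * x ^ (k+1)) ≤
      ∑ i ∈ range (bdry x u K), F (u + i) := by
  induction K with
  | zero => simp [bdry_zero]
  | succ K ih =>
    have hsplit : ∑ i ∈ Finset.range (bdry x u (K+1)), F (u + i)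
        = ∑ i ∈ Finset.range (bdry x u K), F (u + i)
          + ∑ i ∈ Finset.Ico (bdry x u K) (bdry x u (K+1)), F (u + i) := by
      simp only [Finset.range_eq_Ico]
      exact (Finset.sum_Ico_consecutive (fun i : ℕ => F (u + i)) (Nat.zero_le _)
        (bdry_mono hx hu.le (Nat.le_succ K))).symm
    rw [hsplit, Finset.sum_range_succ]
    refine add_le_add ih ?_
    have hxK1 : (0:ℝ) < u * x ^ (K+1) := by positivity
    have hblock : ∀ i ∈ Finset.Ico (bdry x u K) (bdry x u (K+1)),
        F (u * x ^ (K+1)) ≤ F (u + i) := by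
      intro i hi
      rw [Finset.mem_Ico] at hi
      have h1 : (i:ℝ) ≤ (bdry x u (K+1) : ℝ) - 1 := by
        have : (i:ℝ) + 1 ≤ bdry x u (K+1) := by exact_mod_cast Nat.succ_le_of_lt hi.2
        linarith
      have h2 := bdry_lt hx hu.le (k := K + 1)
      exact hFanti (Set.mem_Ici.2 (by positivity)) (Set.mem_Ici.2 hxK1.le) (by nlinarith)
    calc (u * x ^ K * (x - 1) - 1) * F (u * x ^ (K+1))
        ≤ (bdry x u (K+1) - bdry x u K : ℕ) * F (u * x ^ (K+1)) := by
          refine mul_le_mul_of_nonneg_right ?_ (hFpos _ hxK1.le).le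
          have h1 := bdry_lt hx hu.le (k := K)
          have h2 := le_bdry x u (K+1)
          have h3 : (((bdry x u (K+1) - bdry x u K : ℕ)) : ℝ)
              = (bdry x u (K+1) : ℝ) - bdry x u K :=
            Nat.cast_sub (bdry_mono hx hu.le (Nat.le_succ K))
          rw [h3]
          have : x ^ (K+1) = x ^ K * x := pow_succ x K
          nlinarith
      _ = ∑ _i ∈ Finset.Ico (bdry x u K) (bdry x u (K+1)), F (u * x ^ (K+1)) := by
          rw [Finset.sum_const, Nat.card_Ico, nsmul_eq_mul]
      _ ≤ ∑ i ∈ Finset.Ico (bdry x u K) (bdry x u (K+1)), F (u + i) :=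
          Finset.sum_le_sum hblock

end

lemma ratio_pow {x u : ℝ} (hx : 1 < x) {U₀ q : ℝ} (hq : ∀ v, U₀ ≤ v → F (v * x) ≤ q * F v)
    (hu0 : 0 ≤ u) (huU : U₀ ≤ u) (hq0 : 0 ≤ q) :
    ∀ k : ℕ, F (u * x ^ k) ≤ q ^ k * F u := by
  intro k
  induction k with
  | zero => simp
  | succ k ih =>
    have hUk : U₀ ≤ u * x ^ k :=
      le_trans huU (le_mul_of_one_le_right hu0 (one_le_pow₀ hx.le))
    calc F (u * x ^ (k+1)) = F ((u * x ^ k) * x) := by ring_nf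
      _ ≤ q * F (u * x ^ k) := hq _ hUk
      _ ≤ q * (q ^ k * F u) := mul_le_mul_of_nonneg_left ih hq0
      _ = q ^ (k+1) * F u := by ring

lemma sum_range_le_master {x u : ℝ}
    (hFpos : ∀ y ≥ (0:ℝ), 0 < F y) (hFanti : AntitoneOn F (Set.Ici 0))
    (hx : 1 < x) (hu1 : 1 ≤ u) {U₀ q : ℝ} (huU : U₀ ≤ u)
    (hq : ∀ v, U₀ ≤ v → F (v * x) ≤ q * F v) (hq0 : 0 ≤ q) (hxq : x * q < 1)
    (K : ℕ) : ∀ n : ℕ, ∑ i ∈ range n, F (u + i) ≤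
      ∑ k ∈ range K, (u * x ^ k * (x - 1) + 1) * F (u * x ^ k)
        + (u * F u * ((x - 1) * (x * q) ^ K / (1 - x * q)) + F u * (q ^ K / (1 - q))) := by
  intro n
  have hu : (0:ℝ) < u := lt_of_lt_of_le one_pos hu1
  have hq1 : q < 1 := by nlinarith
  have hxq0 : 0 ≤ x * q := by positivity
  obtain ⟨K', hK'⟩ := (((tendsto_pow_atTop_atTop_of_one_lt hx).eventually_ge_atTop
    ((n:ℝ) + 1)).and (eventually_ge_atTop K)).exists
  have hnb : n ≤ bdry x u K' := by
    refine Nat.cast_le (α := ℝ) |>.1 (le_trans ?_ (le_bdry x u K'))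
    nlinarith [hK'.1]
  have step1 : ∑ i ∈ range n, F (u + i) ≤ ∑ i ∈ range (bdry x u K'), F (u + i) :=
    Finset.sum_le_sum_of_subset_of_nonneg (Finset.range_subset_range.2 hnb)
      (fun i _ _ => (hFpos _ (by positivity)).le)
  have step2 := block_upper hFpos hFanti hx hu K'
  have hsplit : ∑ k ∈ range K', (u * x ^ k * (x - 1) + 1) * F (u * x ^ k)
      = ∑ k ∈ range K, (u * x ^ k * (x - 1) + 1) * F (u * x ^ k)
        + ∑ k ∈ Finset.Ico K K', (u * x ^ k * (x - 1) + 1) * F (u * x ^ k) := by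
    simp only [Finset.range_eq_Ico]
    exact (Finset.sum_Ico_consecutive (fun k : ℕ => (u * x ^ k * (x - 1) + 1) * F (u * x ^ k)) (Nat.zero_le _) hK'.2).symm
  have hFu : 0 < F u := hFpos _ hu.le
  have step3 : ∑ k ∈ Finset.Ico K K', (u * x ^ k * (x - 1) + 1) * F (u * x ^ k)
      ≤ u * F u * ((x - 1) * (x * q) ^ K / (1 - x * q)) + F u * (q ^ K / (1 - q)) := by
    have h1 : ∑ k ∈ Finset.Ico K K', (u * x ^ k * (x - 1) + 1) * F (u * x ^ k)
        ≤ ∑ k ∈ Finset.Ico K K',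
          (u * F u * (x - 1) * (x * q) ^ k + F u * q ^ k) := by
      refine Finset.sum_le_sum fun k _ => ?_
      have hcoef : (0:ℝ) ≤ u * x ^ k * (x - 1) + 1 := by
        have h0 : (0:ℝ) ≤ u * x ^ k * (x - 1) :=
          mul_nonneg (by positivity) (by linarith)
        linarith
      calc (u * x ^ k * (x - 1) + 1) * F (u * x ^ k)
          ≤ (u * x ^ k * (x - 1) + 1) * (q ^ k * F u) :=
            mul_le_mul_of_nonneg_left (ratio_pow hx hq hu.le huU hq0 k) hcoef
        _ = u * F u * (x - 1) * (x * q) ^ k + F u * q ^ k := by rw [mul_pow]; ring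
    have h2 : ∑ k ∈ Finset.Ico K K', (u * F u * (x - 1) * (x * q) ^ k + F u * q ^ k)
        = u * F u * (x - 1) * ∑ k ∈ Finset.Ico K K', (x * q) ^ k
          + F u * ∑ k ∈ Finset.Ico K K', q ^ k := by
      rw [Finset.sum_add_distrib, Finset.mul_sum, Finset.mul_sum]
    have g1 : ∑ k ∈ Finset.Ico K K', (x * q) ^ k ≤ (x * q) ^ K / (1 - x * q) :=
      geom_sum_Ico_le_of_lt_one hxq0 hxq
    have g2 : ∑ k ∈ Finset.Ico K K', q ^ k ≤ q ^ K / (1 - q) :=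
      geom_sum_Ico_le_of_lt_one hq0 hq1
    have hc1 : (0:ℝ) ≤ u * F u * (x - 1) :=
      mul_nonneg (by positivity) (by linarith)
    calc ∑ k ∈ Finset.Ico K K', (u * x ^ k * (x - 1) + 1) * F (u * x ^ k)
        ≤ u * F u * (x - 1) * ∑ k ∈ Finset.Ico K K', (x * q) ^ k
          + F u * ∑ k ∈ Finset.Ico K K', q ^ k := by rw [← h2]; exact h1
      _ ≤ u * F u * (x - 1) * ((x * q) ^ K / (1 - x * q)) + F u * (q ^ K / (1 - q)) :=
          add_le_add (mul_le_mul_of_nonneg_left g1 hc1) (mul_le_mul_of_nonneg_left g2 hFu.le)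
      _ = u * F u * ((x - 1) * (x * q) ^ K / (1 - x * q)) + F u * (q ^ K / (1 - q)) := by ring
  calc ∑ i ∈ range n, F (u + i) ≤ ∑ i ∈ range (bdry x u K'), F (u + i) := step1
    _ ≤ ∑ k ∈ range K', (u * x ^ k * (x - 1) + 1) * F (u * x ^ k) := step2
    _ = _ + _ := hsplit
    _ ≤ _ := add_le_add (le_refl _) step3

lemma summable_master {x u : ℝ}
    (hFpos : ∀ y ≥ (0:ℝ), 0 < F y) (hFanti : AntitoneOn F (Set.Ici 0))
    (hx : 1 < x) (hu1 : 1 ≤ u) {U₀ q : ℝ} (huU : U₀ ≤ u)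
    (hq : ∀ v, U₀ ≤ v → F (v * x) ≤ q * F v) (hq0 : 0 ≤ q) (hxq : x * q < 1) :
    Summable (fun i : ℕ => F (u + i)) :=
  summable_of_sum_range_le (fun i => (hFpos _ (by positivity)).le)
    (sum_range_le_master hFpos hFanti hx hu1 huU hq hq0 hxq 0)

lemma tsum_le_master {x u : ℝ}
    (hFpos : ∀ y ≥ (0:ℝ), 0 < F y) (hFanti : AntitoneOn F (Set.Ici 0))
    (hx : 1 < x) (hu1 : 1 ≤ u) {U₀ q : ℝ} (huU : U₀ ≤ u)
    (hq : ∀ v, U₀ ≤ v → F (v * x) ≤ q * F v) (hq0 : 0 ≤ q) (hxq : x * q < 1)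
    (K : ℕ) : ∑' i : ℕ, F (u + i) ≤
      ∑ k ∈ range K, (u * x ^ k * (x - 1) + 1) * F (u * x ^ k)
        + (u * F u * ((x - 1) * (x * q) ^ K / (1 - x * q)) + F u * (q ^ K / (1 - q))) :=
  Real.tsum_le_of_sum_range_le (fun i => (hFpos _ (by positivity)).le)
    (sum_range_le_master hFpos hFanti hx hu1 huU hq hq0 hxq K)

lemma rpow_pow_comm {x : ℝ} (hx : 0 ≤ x) (c : ℝ) (k : ℕ) :
    ((x : ℝ) ^ k) ^ c = (x ^ c) ^ k := by
  rw [← Real.rpow_natCast x k, ← Real.rpow_natCast (x ^ c) k,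
    ← Real.rpow_mul hx, ← Real.rpow_mul hx, mul_comm]

lemma M_tendsto {ξ : ℝ} (hξ : 0 < ξ) :
    Filter.Tendsto (fun x : ℝ => (x - 1) / (1 - x ^ (-1/ξ)))
      (nhdsWithin 1 (Set.Ioi 1)) (nhds ξ) := by
  have hd : HasDerivAt (fun x : ℝ => x ^ (-1/ξ)) (-1/ξ) 1 := by
    have := Real.hasDerivAt_rpow_const (x := 1) (p := -1/ξ) (Or.inl one_ne_zero)
    simpa using this
  have hslope := hasDerivAt_iff_tendsto_slope.1 hd
  have hne : (-1/ξ : ℝ) ≠ 0 := by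
    simp only [ne_eq, div_eq_zero_iff]
    push_neg
    exact ⟨by norm_num, hξ.ne'⟩
  have hslope' : Filter.Tendsto (slope (fun x : ℝ => x ^ (-1/ξ)) 1)
      (nhdsWithin 1 (Set.Ioi 1)) (nhds (-1/ξ)) :=
    hslope.mono_left (nhdsWithin_mono 1 (fun y hy => ne_of_gt hy))
  have h2 : Filter.Tendsto (fun x : ℝ => -(slope (fun x : ℝ => x ^ (-1/ξ)) 1 x)⁻¹)
      (nhdsWithin 1 (Set.Ioi 1)) (nhds (-(-1/ξ)⁻¹)) :=
    (hslope'.inv₀ hne).neg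
  have heq : ∀ x : ℝ, -(slope (fun x : ℝ => x ^ (-1/ξ)) 1 x)⁻¹
      = (x - 1) / (1 - x ^ (-1/ξ)) := by
    intro x
    rw [slope_def_field, Real.one_rpow, inv_div, ← div_neg, neg_sub]
  have hval : -(-1/ξ)⁻¹ = ξ := by field_simp
  have h3 := h2.congr heq
  rwa [hval] at h3

lemma q_setup {ξ x : ℝ} (hξ : 0 < ξ) (hx : 1 < x)
    (hFpos : ∀ y ≥ (0:ℝ), 0 < F y)
    (hRVx : Filter.Tendsto (fun u => F (u * x) / F u) Filter.atTop
      (nhds (x ^ (-1/ξ - 1)))) :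
    ∃ q U₀ : ℝ, 0 ≤ q ∧ x * q < 1 ∧ q < 1 ∧ (1:ℝ) ≤ U₀ ∧
      ∀ v, U₀ ≤ v → F (v * x) ≤ q * F v := by
  set β := x ^ (-1/ξ - 1) with hβdef
  have hx0 : (0:ℝ) < x := lt_trans one_pos hx
  have hβpos : 0 < β := Real.rpow_pos_of_pos hx0 _
  have hβ : β < x⁻¹ := by
    have hlt : (-1/ξ - 1 : ℝ) < -1 := by
      have : (-1:ℝ)/ξ < 0 := div_neg_of_neg_of_pos (by norm_num) hξ
      linarith
    have h1 : x ^ (-1/ξ - 1) < x ^ (-1:ℝ) := (Real.rpow_lt_rpow_left_iff hx).2 hlt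
    rwa [Real.rpow_neg_one] at h1
  have hxinv : (0:ℝ) < x⁻¹ := by positivity
  set q := (β + x⁻¹)/2 with hqdef
  have hq1 : β < q := by rw [hqdef]; linarith
  have hq2 : q < x⁻¹ := by rw [hqdef]; linarith
  have hq0 : (0:ℝ) ≤ q := by rw [hqdef]; linarith
  have hxq : x * q < 1 := by
    have h := mul_lt_mul_of_pos_left hq2 hx0
    rwa [mul_inv_cancel₀ hx0.ne'] at h
  have hqlt1 : q < 1 := by nlinarith
  obtain ⟨U₁, hU₁⟩ := eventually_atTop.1 (hRVx.eventually_lt_const hq1)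
  refine ⟨q, max U₁ 1, hq0, hxq, hqlt1, le_max_right _ _, fun v hv => ?_⟩
  have hv1 : (1:ℝ) ≤ v := le_trans (le_max_right _ _) hv
  have hFv : 0 < F v := hFpos _ (by linarith)
  have h := hU₁ v (le_trans (le_max_left _ _) hv)
  calc F (v * x) = (F (v * x) / F v) * F v := by field_simp
    _ ≤ q * F v := mul_le_mul_of_nonneg_right h.le hFv.le

lemma upper_branch {ξ : ℝ} (hξ : 0 < ξ)
    (hFpos : ∀ y ≥ (0:ℝ), 0 < F y) (hFanti : AntitoneOn F (Set.Ici 0))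
    (hRV : ∀ x ≥ (1:ℝ), Filter.Tendsto (fun u : ℝ => F (u * x) / F u)
      Filter.atTop (nhds (x ^ (-1/ξ - 1))))
    {b : ℝ} (hb : ξ < b) :
    ∀ᶠ u : ℝ in atTop, u⁻¹ * ((∑' i : ℕ, F (u + i)) / F u) < b := by
  set ε := b - ξ with hεdef
  have hε : 0 < ε := by rw [hεdef]; linarith
  obtain ⟨x, hMx, hxmem⟩ := (((M_tendsto hξ).eventually_lt_const
    (show ξ < ξ + ε/2 by linarith)).and self_mem_nhdsWithin).exists
  have hx : 1 < x := hxmem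
  have hx0 : (0:ℝ) < x := lt_trans one_pos hx
  set β := x ^ (-1/ξ - 1) with hβdef
  have hβpos : 0 < β := Real.rpow_pos_of_pos hx0 _
  obtain ⟨q, U₀, hq0, hxq, hq1, hU₀1, hq⟩ := q_setup hξ hx hFpos (hRV x hx.le)
  have hxq0 : (0:ℝ) ≤ x * q := mul_nonneg hx0.le hq0
  have hrx : x * β = x ^ ((-1:ℝ)/ξ) := by
    have h : ((-1:ℝ)/ξ) = 1 + (-1/ξ - 1) := by ring
    rw [h, Real.rpow_add hx0, Real.rpow_one, hβdef]
  have hr0 : 0 < x * β := mul_pos hx0 hβpos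
  have hr1 : x * β < 1 := by
    have hlt : ((-1:ℝ)/ξ) < 0 := div_neg_of_neg_of_pos (by norm_num) hξ
    have h1 : x ^ ((-1:ℝ)/ξ) < x ^ (0:ℝ) := (Real.rpow_lt_rpow_left_iff hx).2 hlt
    rw [Real.rpow_zero] at h1
    rw [hrx]; exact h1
  have htail0 : Filter.Tendsto (fun K : ℕ => (x-1)*((x*q)^K/(1-x*q))) atTop (nhds 0) := by
    have h := tendsto_pow_atTop_nhds_zero_of_lt_one hxq0 hxq
    have h2 := (h.div_const (1-x*q)).const_mul (x-1)
    simpa using h2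
  obtain ⟨K, hKtail⟩ := (htail0.eventually_lt_const (half_pos hε)).exists
  have hterm : ∀ k : ℕ, Filter.Tendsto (fun u : ℝ => F (u * x ^ k) / F u)
      atTop (nhds (β ^ k)) := by
    intro k
    have h := hRV (x ^ k) (one_le_pow₀ hx.le)
    rwa [rpow_pow_comm hx0.le] at h
  set L : ℝ := ∑ k ∈ range K, x^k*(x-1) * β^k + (x-1)*((x*q)^K/(1-x*q)) with hLdef
  have hUB : Filter.Tendsto (fun u : ℝ => ∑ k ∈ range K, (x^k*(x-1) + u⁻¹) * (F (u*x^k)/F u)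
      + ((x-1)*((x*q)^K/(1-x*q)) + u⁻¹ * (q^K/(1-q)))) atTop (nhds L) := by
    have h1 : Filter.Tendsto (fun u : ℝ => ∑ k ∈ range K, (x^k*(x-1) + u⁻¹) * (F (u*x^k)/F u))
        atTop (nhds (∑ k ∈ range K, (x^k*(x-1) + 0) * β^k)) :=
      tendsto_finset_sum _ fun k _ =>
        (tendsto_const_nhds.add tendsto_inv_atTop_zero).mul (hterm k)
    have h2 : Filter.Tendsto (fun u : ℝ => (x-1)*((x*q)^K/(1-x*q)) + u⁻¹ * (q^K/(1-q)))
        atTop (nhds ((x-1)*((x*q)^K/(1-x*q)) + 0 * (q^K/(1-q)))) :=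
      tendsto_const_nhds.add (tendsto_inv_atTop_zero.mul tendsto_const_nhds)
    have h3 := h1.add h2
    have hval : ∑ k ∈ range K, (x^k*(x-1) + 0) * β^k
        + ((x-1)*((x*q)^K/(1-x*q)) + 0 * (q^K/(1-q))) = L := by
      rw [hLdef]
      congr 1
      · exact Finset.sum_congr rfl fun k _ => by ring
      · ring
    rwa [hval] at h3
  have hLb : L < b := by
    have hsum : ∑ k ∈ range K, x^k*(x-1) * β^k = (x-1) * ∑ k ∈ range K, (x*β)^k := by
      rw [Finset.mul_sum]
      refine Finset.sum_congr rfl fun k _ => ?_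
      rw [mul_pow]; ring
    have hgeom : ∑ k ∈ range K, (x*β)^k ≤ 1/(1-(x*β)) := by
      have h := geom_sum_Ico_le_of_lt_one hr0.le hr1 (m := 0) (n := K)
      simpa using h
    have hx1 : (0:ℝ) ≤ x - 1 := by linarith
    have h1 : (x-1) * ∑ k ∈ range K, (x*β)^k ≤ (x-1)/(1-(x*β)) := by
      calc (x-1) * ∑ k ∈ range K, (x*β)^k ≤ (x-1) * (1/(1-(x*β))) :=
            mul_le_mul_of_nonneg_left hgeom hx1
        _ = (x-1)/(1-(x*β)) := by ring
    have hM : (x-1)/(1-(x*β)) < ξ + ε/2 := by rw [hrx]; exact hMx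
    rw [hLdef, hsum]
    have := hKtail
    linarith
  have hcomp : ∀ᶠ u : ℝ in atTop, u⁻¹ * ((∑' i : ℕ, F (u + i)) / F u)
      ≤ ∑ k ∈ range K, (x^k*(x-1) + u⁻¹) * (F (u*x^k)/F u)
        + ((x-1)*((x*q)^K/(1-x*q)) + u⁻¹ * (q^K/(1-q))) := by
    filter_upwards [eventually_ge_atTop (max U₀ 1)] with u hu
    have hu1 : (1:ℝ) ≤ u := le_trans (le_max_right _ _) hu
    have huU : U₀ ≤ u := le_trans (le_max_left _ _) hu
    have hu0 : (0:ℝ) < u := lt_of_lt_of_le one_pos hu1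
    have hFu : 0 < F u := hFpos _ hu0.le
    have hune : u ≠ 0 := hu0.ne'
    have hFune : F u ≠ 0 := hFu.ne'
    have hfin := tsum_le_master hFpos hFanti hx hu1 huU hq hq0 hxq K
    have heq : u⁻¹ * ((∑' i : ℕ, F (u + i)) / F u)
        = (∑' i : ℕ, F (u + i)) / (u * F u) := by
      rw [inv_mul_eq_div, div_div, mul_comm (F u) u]
    have h1q : (1:ℝ) - q ≠ 0 := by linarith
    have h1xq : (1:ℝ) - x*q ≠ 0 := by linarith
    have hkey : ∀ A B : ℝ, (B + u⁻¹) * (A / F u) * (u * F u) = (u * B + 1) * A := by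
      intro A B
      calc (B + u⁻¹) * (A / F u) * (u * F u)
          = (B * u + u⁻¹ * u) * (A / F u * F u) := by ring
        _ = (u * B + 1) * A := by
            rw [inv_mul_cancel₀ hune, div_mul_cancel₀ _ hFune]; ring
    rw [heq, div_le_iff₀ (by positivity)]
    refine le_trans hfin (le_of_eq ?_)
    rw [add_mul, Finset.sum_mul]
    congr 1
    · refine Finset.sum_congr rfl fun k _ => ?_
      rw [hkey]
      ring
    · field_simp
  filter_upwards [hcomp, hUB.eventually_lt_const hLb] with u h1 h2
  exact lt_of_le_of_lt h1 h2

lemma lower_branch {ξ : ℝ} (hξ : 0 < ξ)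
    (hFpos : ∀ y ≥ (0:ℝ), 0 < F y) (hFanti : AntitoneOn F (Set.Ici 0))
    (hRV : ∀ x ≥ (1:ℝ), Filter.Tendsto (fun u : ℝ => F (u * x) / F u)
      Filter.atTop (nhds (x ^ (-1/ξ - 1))))
    {b : ℝ} (hb : b < ξ) :
    ∀ᶠ u : ℝ in atTop, b < u⁻¹ * ((∑' i : ℕ, F (u + i)) / F u) := by
  set ε := ξ - b with hεdef
  have hε : 0 < ε := by rw [hεdef]; linarith
  have hβM : Filter.Tendsto (fun x : ℝ => x ^ (-1/ξ - 1) * ((x-1)/(1 - x^(-1/ξ))))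
      (nhdsWithin 1 (Set.Ioi 1)) (nhds ξ) := by
    have h1 : Filter.Tendsto (fun x : ℝ => x ^ (-1/ξ - 1)) (nhdsWithin 1 (Set.Ioi 1))
        (nhds 1) := by
      have hc : ContinuousAt (fun x : ℝ => x ^ (-1/ξ - 1)) 1 :=
        Real.continuousAt_rpow_const 1 _ (Or.inl one_ne_zero)
      have h := (hc.continuousWithinAt (s := Set.Ioi 1)).tendsto
      simpa [Real.one_rpow] using h
    have h2 := h1.mul (M_tendsto hξ)
    simpa using h2
  obtain ⟨x, hMx, hxmem⟩ := ((hβM.eventually_const_lt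
    (show ξ - ε/2 < ξ by linarith)).and self_mem_nhdsWithin).exists
  have hx : 1 < x := hxmem
  have hx0 : (0:ℝ) < x := lt_trans one_pos hx
  set β := x ^ (-1/ξ - 1) with hβdef
  have hβpos : 0 < β := Real.rpow_pos_of_pos hx0 _
  obtain ⟨q, U₀, hq0, hxq, hq1, hU₀1, hq⟩ := q_setup hξ hx hFpos (hRV x hx.le)
  have hrx : x * β = x ^ ((-1:ℝ)/ξ) := by
    have h : ((-1:ℝ)/ξ) = 1 + (-1/ξ - 1) := by ring
    rw [h, Real.rpow_add hx0, Real.rpow_one, hβdef]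
  have hr0 : 0 < x * β := mul_pos hx0 hβpos
  have hr1 : x * β < 1 := by
    have hlt : ((-1:ℝ)/ξ) < 0 := div_neg_of_neg_of_pos (by norm_num) hξ
    have h1 : x ^ ((-1:ℝ)/ξ) < x ^ (0:ℝ) := (Real.rpow_lt_rpow_left_iff hx).2 hlt
    rw [Real.rpow_zero] at h1
    rw [hrx]; exact h1
  set M : ℝ := (x-1)/(1-(x*β)) with hMdef
  have hM0 : 0 < M := div_pos (by linarith) (by linarith)
  have hMx' : ξ - ε/2 < β * M := by
    have : (x-1)/(1 - x^(-1/ξ)) = M := by rw [hMdef, hrx]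
    rw [← this]
    exact hMx
  have hK0 : Filter.Tendsto (fun k : ℕ => β * M * (x*β) ^ k) atTop (nhds 0) := by
    have h := (tendsto_pow_atTop_nhds_zero_of_lt_one hr0.le hr1).const_mul (β * M)
    simpa using h
  obtain ⟨K, hKr⟩ := (hK0.eventually_lt_const (half_pos hε)).exists
  have hterm : ∀ k : ℕ, Filter.Tendsto (fun u : ℝ => F (u * x ^ k) / F u)
      atTop (nhds (β ^ k)) := by
    intro k
    have h := hRV (x ^ k) (one_le_pow₀ hx.le)
    rwa [rpow_pow_comm hx0.le] at h
  set L : ℝ := ∑ k ∈ range K, x^k*(x-1) * β^(k+1) with hLdef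
  have hLB : Filter.Tendsto (fun u : ℝ =>
      ∑ k ∈ range K, (x^k*(x-1) - u⁻¹) * (F (u*x^(k+1))/F u)) atTop (nhds L) := by
    have h1 : Filter.Tendsto (fun u : ℝ =>
        ∑ k ∈ range K, (x^k*(x-1) - u⁻¹) * (F (u*x^(k+1))/F u))
        atTop (nhds (∑ k ∈ range K, (x^k*(x-1) - 0) * β^(k+1))) :=
      tendsto_finset_sum _ fun k _ =>
        (tendsto_const_nhds.sub tendsto_inv_atTop_zero).mul (hterm (k+1))
    have hval : ∑ k ∈ range K, (x^k*(x-1) - 0) * β^(k+1) = L := by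
      rw [hLdef]
      exact Finset.sum_congr rfl fun k _ => by ring
    rwa [hval] at h1
  have hbL : b < L := by
    have hsum : L = β * (x-1) * ∑ k ∈ range K, (x*β)^k := by
      rw [hLdef, Finset.mul_sum]
      refine Finset.sum_congr rfl fun k _ => ?_
      rw [mul_pow]; ring
    have hgeom : ∑ k ∈ range K, (x*β)^k = (1 - (x*β)^K)/(1-(x*β)) := by
      rw [geom_sum_eq hr1.ne K, ← neg_sub (1:ℝ) ((x*β)^K), ← neg_sub (1:ℝ) (x*β),
        neg_div_neg_eq]
    have hLeq : L = β*M - β*M*(x*β)^K := by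
      rw [hsum, hgeom, hMdef]
      have h1r : (1:ℝ) - x*β ≠ 0 := by linarith
      field_simp
    rw [hLeq]
    linarith
  have hcomp : ∀ᶠ u : ℝ in atTop,
      (∑ k ∈ range K, (x^k*(x-1) - u⁻¹) * (F (u*x^(k+1))/F u))
        ≤ u⁻¹ * ((∑' i : ℕ, F (u + i)) / F u) := by
    filter_upwards [eventually_ge_atTop (max U₀ 1)] with u hu
    have hu1 : (1:ℝ) ≤ u := le_trans (le_max_right _ _) hu
    have huU : U₀ ≤ u := le_trans (le_max_left _ _) hu
    have hu0 : (0:ℝ) < u := lt_of_lt_of_le one_pos hu1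
    have hFu : 0 < F u := hFpos _ hu0.le
    have hune : u ≠ 0 := hu0.ne'
    have hFune : F u ≠ 0 := hFu.ne'
    have hsummable := summable_master hFpos hFanti hx hu1 huU hq hq0 hxq
    have hlow := block_lower hFpos hFanti hx hu0 K
    have hts : ∑ i ∈ range (bdry x u K), F (u + i) ≤ ∑' i : ℕ, F (u + i) :=
      Summable.sum_le_tsum _ (fun i _ => (hFpos _ (by positivity)).le) hsummable
    have heq : u⁻¹ * ((∑' i : ℕ, F (u + i)) / F u)
        = (∑' i : ℕ, F (u + i)) / (u * F u) := by
      rw [inv_mul_eq_div, div_div, mul_comm (F u) u]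
    have hkey : ∀ A B : ℝ, (B - u⁻¹) * (A / F u) * (u * F u) = (u * B - 1) * A := by
      intro A B
      calc (B - u⁻¹) * (A / F u) * (u * F u)
          = (B * u - u⁻¹ * u) * (A / F u * F u) := by ring
        _ = (u * B - 1) * A := by
            rw [inv_mul_cancel₀ hune, div_mul_cancel₀ _ hFune]; ring
    rw [heq, le_div_iff₀ (by positivity)]
    refine le_trans (le_of_eq ?_) (le_trans hlow hts)
    rw [Finset.sum_mul]
    refine Finset.sum_congr rfl fun k _ => ?_
    rw [hkey]
    ring
  filter_upwards [hcomp, hLB.eventually_const_lt hbL] with u h1 h2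
  exact lt_of_lt_of_le h2 h1

end RVAux

/-- If `F̄` is positive, nonincreasing on `[0,∞)` and regularly varying
with index `-1/ξ - 1` (`ξ > 0`), then `u⁻¹ ∑_{i=0}^∞ F̄(u+i)/F̄(u) → ξ` as `u → ∞`. -/
theorem rv_tail_sum_ratio_tendsto (ξ : ℝ) (hξ : 0 < ξ) (F : ℝ → ℝ)
    (hFpos : ∀ x ≥ (0:ℝ), 0 < F x)
    (hFanti : AntitoneOn F (Set.Ici 0))
    (hRV : ∀ x ≥ (1:ℝ), Filter.Tendsto (fun u : ℝ => F (u * x) / F u)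
      Filter.atTop (nhds (x ^ (-1/ξ - 1)))) :
    Filter.Tendsto (fun u : ℝ => u⁻¹ * ∑' i : ℕ, F (u + i) / F u)
      Filter.atTop (nhds ξ) := by
  simp only [tsum_div_const]
  exact tendsto_order.2
    ⟨fun b hb => RVAux.lower_branch hξ hFpos hFanti hRV hb,
     fun b hb => RVAux.upper_branch hξ hFpos hFanti hRV hb⟩
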